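/- Let P_n+1 be the directed path with n+2 vertices v_0,...,v_{n+1} and edges (v_i,v_{i+1}), and let L_n be the strict linear order on {0,...,n} viewed as a digraph with an edge (i,j) whenever i<j. Then for every finite digraph G, there exists a digraph homomorphism from P_{n+1} to G if and only if there is no digraph homomorphism from G to L_n. -/

import Mathlib

/-- Duality between the directed path P_{n+1} (vertices v_0,...,v_{n+1}) and the
transitive tournament L_n on {0,...,n}: a finite digraph G admits a homomorphism
from P_{n+1} iff G admits no homomorphism to L_n. -/
theorem path_linear_order_duality (n : ℕ) (V : Type) [Fintype V] (E : V → V → Prop) :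
    (∃ h : Fin (n + 2) → V, ∀ i : Fin (n + 1), E (h i.castSucc) (h i.succ)) ↔
      ¬ ∃ g : V → Fin (n + 1), ∀ u v, E u v → g u < g v := by
  classical
  constructor
  · rintro ⟨h, hh⟩ ⟨g, hg⟩
    have hsm : StrictMono (fun i => g (h i)) := by
      rw [Fin.strictMono_iff_lt_succ]
      intro i
      exact hg _ _ (hh i)
    have hcard := Fintype.card_le_of_injective _ hsm.injective
    simp [Fintype.card_fin] at hcard
  · intro hng
    by_contra hne
    apply hng
    set W : ℕ → V → Prop := fun k v => ∃ h : Fin (k+1) → V,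
      (∀ i : Fin k, E (h i.castSucc) (h i.succ)) ∧ h (Fin.last k) = v with hWdef
    have hW0 : ∀ v, W 0 v := fun v => ⟨fun _ => v, fun i => i.elim0, rfl⟩
    have hWn : ∀ v, ¬ W (n+1) v := by
      rintro v ⟨h, hh, -⟩
      exact hne ⟨h, hh⟩
    have hWext : ∀ k u v, W k u → E u v → W (k+1) v := by
      rintro k u v ⟨h, hh, hl⟩ huv
      refine ⟨Fin.snoc h v, ?_, Fin.snoc_last _ _⟩
      intro i
      induction i using Fin.lastCases with
      | last =>
          simpa [Fin.succ_last, Fin.snoc_castSucc, hl] using huv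
      | cast j =>
          have : (j.castSucc).succ = (j.succ).castSucc := Fin.succ_castSucc j
          simpa only [this, Fin.snoc_castSucc] using hh j
    have hg0 : ∀ v, W (Nat.findGreatest (fun k => W k v) n) v := fun v =>
      Nat.findGreatest_spec (P := fun k => W k v) (Nat.zero_le n) (hW0 v)
    have hle : ∀ v, Nat.findGreatest (fun k => W k v) n ≤ n := fun _ =>
      Nat.findGreatest_le n
    refine ⟨fun v => ⟨Nat.findGreatest (fun k => W k v) n, Nat.lt_succ_of_le (hle v)⟩, ?_⟩
    intro u v huv
    have h1 : W (Nat.findGreatest (fun k => W k u) n + 1) v := hWext _ _ _ (hg0 u) huv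
    have h2 : Nat.findGreatest (fun k => W k u) n + 1 ≤ n := by
      by_contra hc
      have heq : Nat.findGreatest (fun k => W k u) n = n := by
        have := hle u; omega
      rw [heq] at h1
      exact hWn v h1
    have h3 := Nat.le_findGreatest (P := fun k => W k v) h2 h1
    simp only [Fin.mk_lt_mk]
    omega
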